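/- Suppose Z is invertible, A^π*C = 0, B*A^π = 0, and C*D^π*Z^{-1}*B = 0. Then S has a Drazin inverse, given by S^D = A^D + A^D*C*Z^{-1}*B*A^D. -/

import Mathlib

open Matrix Finset

/-- An idempotent complex matrix with zero trace is zero. -/
theorem idem_trace_zero {n : Type*} [Fintype n] [DecidableEq n]
    (E : Matrix n n ℂ) (hE : E * E = E) (h0 : E.trace = 0) : E = 0 := by
  have hf : (Matrix.toLin' E) ∘ₗ (Matrix.toLin' E) = Matrix.toLin' E := by
    rw [← Matrix.toLin'_mul, hE]
  obtain ⟨Pm, hP⟩ := (LinearMap.isProj_iff_isIdempotentElem _).mpr hf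
  have htr := hP.trace
  have htrE : LinearMap.trace ℂ _ (Matrix.toLin' E) = E.trace := by
    rw [LinearMap.trace_eq_matrix_trace ℂ (Pi.basisFun ℂ n),
      LinearMap.toMatrix_eq_toMatrix', LinearMap.toMatrix'_toLin']
  have hfin : (Module.finrank ℂ Pm : ℂ) = 0 := by rw [← htr, htrE, h0]
  have hfin' : Module.finrank ℂ Pm = 0 := by exact_mod_cast hfin
  have hbot : Pm = ⊥ := Submodule.finrank_eq_zero.mp hfin'
  have hzero : Matrix.toLin' E = 0 := by
    apply LinearMap.ext
    intro x
    have hm := hP.map_mem x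
    rw [hbot, Submodule.mem_bot] at hm
    simpa using hm
  exact (LinearEquiv.map_eq_zero_iff Matrix.toLin').mp hzero

/-- `X` is a Drazin inverse of the square matrix `M`: `X*M*X = X`, `M*X = X*M`,
and `M^(l+1)*X = M^l` for some natural number `l`. -/
def IsDrazinInverse {n : Type*} [Fintype n] [DecidableEq n]
    (M X : Matrix n n ℂ) : Prop :=
  X * M * X = X ∧ M * X = X * M ∧ ∃ l : ℕ, M ^ (l + 1) * X = M ^ l

theorem stmt18
    {p q : Type*} [Fintype p] [DecidableEq p] [Fintype q] [DecidableEq q]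
    (A AD : Matrix p p ℂ) (D DD : Matrix q q ℂ)
    (B : Matrix q p ℂ) (C : Matrix p q ℂ)
    (hA : IsDrazinInverse A AD) (hD : IsDrazinInverse D DD)
    (S : Matrix p p ℂ) (hS : S = A - C * DD * B)
    (Z : Matrix q q ℂ) (hZdef : Z = D - B * AD * C)
    (hZinv : IsUnit Z)
    (Aπ : Matrix p p ℂ) (Dπ : Matrix q q ℂ)
    (hAπ : Aπ = 1 - A * AD) (hDπ : Dπ = 1 - D * DD)
    (h1 : Aπ * C = 0) (h2 : B * Aπ = 0) (h3 : C * Dπ * Z⁻¹ * B = 0) :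
    IsDrazinInverse S (AD + AD * C * Z⁻¹ * B * AD) := by
  obtain ⟨hA1, hA2, k, hA3⟩ := hA
  obtain ⟨hD1, hD2, -⟩ := hD
  rw [hAπ] at h1 h2
  rw [hDπ] at h3
  -- basic facts
  have hdet : IsUnit Z.det := (Matrix.isUnit_iff_isUnit_det Z).mp hZinv
  have hZZi : Z * Z⁻¹ = 1 := Matrix.mul_nonsing_inv Z hdet
  have hZiZ : Z⁻¹ * Z = 1 := Matrix.nonsing_inv_mul Z hdet
  have hC : A * AD * C = C := by
    have h := h1
    rw [Matrix.sub_mul, Matrix.one_mul, sub_eq_zero] at h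
    exact h.symm
  have hB : B * (A * AD) = B := by
    have h := h2
    rw [Matrix.mul_sub, Matrix.mul_one, sub_eq_zero] at h
    exact h.symm
  have hBADA : B * (AD * A) = B := by
    rw [← hA2]; exact hB
  have hBADC : B * AD * C = D - Z := by rw [hZdef, sub_sub_cancel]
  have hBADCr : B * (AD * C) = D - Z := by rw [← Matrix.mul_assoc]; exact hBADC
  have hA1' : AD * (A * AD) = AD := by rw [← Matrix.mul_assoc]; exact hA1
  have hPAD : A * AD * AD = AD := by rw [hA2, Matrix.mul_assoc]; exact hA1'
  -- generalized collapses
  have hCm : ∀ M : Matrix q p ℂ, A * (AD * (C * M)) = C * M := fun M => by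
    rw [← Matrix.mul_assoc, ← Matrix.mul_assoc, hC]
  have hBADCm : ∀ M : Matrix q p ℂ, B * (AD * (C * M)) = D * M - Z * M := fun M => by
    rw [← Matrix.mul_assoc, ← Matrix.mul_assoc, hBADC, Matrix.sub_mul]
  have hZZm : ∀ M : Matrix q p ℂ, Z * (Z⁻¹ * M) = M := fun M => by
    rw [← Matrix.mul_assoc, hZZi, Matrix.one_mul]
  have hZiZm : ∀ M : Matrix q p ℂ, Z⁻¹ * (Z * M) = M := fun M => by
    rw [← Matrix.mul_assoc, hZiZ, Matrix.one_mul]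
  have hswap : ∀ M : Matrix q p ℂ, D * (DD * M) = DD * (D * M) := fun M => by
    rw [← Matrix.mul_assoc, hD2, Matrix.mul_assoc]
  -- consequence of h3 (multiplied by AD on the right)
  have hkey : C * (Z⁻¹ * (B * AD)) = C * (DD * (D * (Z⁻¹ * (B * AD)))) := by
    have h : C * (1 - D * DD) * Z⁻¹ * B * AD = 0 := by rw [h3, Matrix.zero_mul]
    rw [Matrix.mul_sub, Matrix.mul_one, Matrix.sub_mul, Matrix.sub_mul, Matrix.sub_mul] at h
    simp only [Matrix.mul_assoc] at h
    rw [sub_eq_zero] at h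
    rw [h, hswap]
  set X : Matrix p p ℂ := AD + AD * C * Z⁻¹ * B * AD with hX
  set T : Matrix p p ℂ := AD * (C * (Z⁻¹ * (B - D * (DD * B)))) with hT
  -- L1 : S * X = A * AD
  have L1 : S * X = A * AD := by
    rw [hS, hX]
    simp only [Matrix.sub_mul, Matrix.mul_add, Matrix.mul_assoc]
    rw [hCm (Z⁻¹ * (B * AD)), hBADCm (Z⁻¹ * (B * AD)), hZZm (B * AD)]
    simp only [Matrix.mul_sub]
    rw [← hkey]
    abel
  -- L2 : X * S = A * AD + T
  have L2 : X * S = A * AD + T := by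
    rw [hS, hX, hT]
    simp only [Matrix.add_mul, Matrix.mul_sub, Matrix.mul_assoc]
    rw [hBADA, hBADCm (DD * B)]
    simp only [Matrix.mul_sub]
    rw [hZiZm (DD * B)]
    rw [← hA2]
    abel
  -- L4 : X * (A * AD) = X
  have L4 : X * (A * AD) = X := by
    rw [hX]
    simp only [Matrix.add_mul, Matrix.mul_assoc]
    rw [hA1']
  -- idempotency of X * S
  have hIdem : (X * S) * (X * S) = X * S := by
    calc (X * S) * (X * S) = X * ((S * X) * S) := by
          simp only [Matrix.mul_assoc]
      _ = X * ((A * AD) * S) := by rw [L1]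
      _ = (X * (A * AD)) * S := by rw [← Matrix.mul_assoc]
      _ = X * S := by rw [L4]
  -- T * T = -T
  have hPP : (A * AD) * (A * AD) = A * AD := by
    rw [Matrix.mul_assoc, hA1']
  have hPT : (A * AD) * T = T := by
    rw [hT, ← Matrix.mul_assoc, hPAD]
  have hTP : T * (A * AD) = T := by
    rw [hT]
    simp only [Matrix.mul_assoc, Matrix.sub_mul]
    simp only [hB]
  have hTT : T * T = -T := by
    have e : (A * AD + T) * (A * AD + T) = A * AD + T := by
      rw [← L2]; exact hIdem
    rw [Matrix.add_mul, Matrix.mul_add, Matrix.mul_add, hPP, hPT, hTP] at e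
    have e3 : T + T * T = 0 := add_eq_left.mp e
    exact eq_neg_of_add_eq_zero_right e3
  -- trace of T is zero
  have hGB : (1 - D * DD) * B = B - D * (DD * B) := by
    rw [Matrix.sub_mul, Matrix.one_mul, Matrix.mul_assoc]
  have hcommD : (1 - D * DD) * D = D * (1 - D * DD) := by
    rw [Matrix.sub_mul, Matrix.mul_sub, Matrix.one_mul, Matrix.mul_one, Matrix.mul_assoc, hD2]
  have hTrT : T.trace = 0 := by
    have step1 : T = (AD * C) * (Z⁻¹ * ((1 - D * DD) * B)) := by
      rw [hT, hGB, Matrix.mul_assoc]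
    have step2 : (Z⁻¹ * ((1 - D * DD) * B)) * (AD * C) = Z⁻¹ * ((1 - D * DD) * (D - Z)) := by
      rw [Matrix.mul_assoc, Matrix.mul_assoc, hBADCr]
    have e4 : T.trace = (Z⁻¹ * ((1 - D * DD) * (D - Z))).trace := by
      rw [step1, Matrix.trace_mul_comm, step2]
    have h30 : AD * (C * ((1 - D * DD) * (Z⁻¹ * B))) = (0 : Matrix p p ℂ) := by
      have h : AD * (C * (1 - D * DD) * Z⁻¹ * B) = 0 := by rw [h3, Matrix.mul_zero]
      simpa only [Matrix.mul_assoc] using h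
    have e5 : ((1 - D * DD) * (Z⁻¹ * (D - Z))).trace = 0 := by
      have hmm : ((1 - D * DD) * (Z⁻¹ * B)) * (AD * C) = (1 - D * DD) * (Z⁻¹ * (D - Z)) := by
        rw [Matrix.mul_assoc, Matrix.mul_assoc, hBADCr]
      calc ((1 - D * DD) * (Z⁻¹ * (D - Z))).trace
          = (((1 - D * DD) * (Z⁻¹ * B)) * (AD * C)).trace := by rw [hmm]
        _ = ((AD * C) * ((1 - D * DD) * (Z⁻¹ * B))).trace := by rw [Matrix.trace_mul_comm]
        _ = (AD * (C * ((1 - D * DD) * (Z⁻¹ * B)))).trace := by rw [Matrix.mul_assoc]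
        _ = 0 := by rw [h30, Matrix.trace_zero]
    have e6 : (Z⁻¹ * ((1 - D * DD) * (D - Z))).trace
        = ((1 - D * DD) * (Z⁻¹ * (D - Z))).trace := by
      have lhs1 : Z⁻¹ * ((1 - D * DD) * (D - Z))
          = Z⁻¹ * (D * (1 - D * DD)) - Z⁻¹ * ((1 - D * DD) * Z) := by
        rw [Matrix.mul_sub ((1 : Matrix q q ℂ) - D * DD) D Z, Matrix.mul_sub, hcommD]
      have rhs1 : (1 - D * DD) * (Z⁻¹ * (D - Z))
          = (1 - D * DD) * (Z⁻¹ * D) - (1 - D * DD) * (Z⁻¹ * Z) := by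
        rw [Matrix.mul_sub Z⁻¹ D Z, Matrix.mul_sub]
      rw [lhs1, rhs1, Matrix.trace_sub, Matrix.trace_sub]
      congr 1
      · rw [← Matrix.mul_assoc, Matrix.trace_mul_comm]
      · rw [Matrix.trace_mul_comm, Matrix.mul_assoc, hZZi, hZiZ]
    rw [e4, e6, e5]
  -- T = 0
  have hT0 : T = 0 := by
    have hnegidem : (-T) * (-T) = -T := by
      rw [neg_mul_neg, hTT]
    have h := idem_trace_zero (-T) hnegidem (by rw [Matrix.trace_neg, hTrT, neg_zero])
    exact neg_eq_zero.mp h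
  have hXS : X * S = A * AD := by rw [L2, hT0, add_zero]
  have hPX : (A * AD) * X = X := by
    rw [hX, Matrix.mul_add]
    simp only [← Matrix.mul_assoc]
    rw [hPAD]
  -- powers of S kill 1 - A*AD like powers of A
  have cAAD : Commute A AD := hA2
  have cP : Commute A (1 - A * AD) :=
    (Commute.one_right A).sub_right ((Commute.refl A).mul_right cAAD)
  have hpow : ∀ m : ℕ, S ^ m * (1 - A * AD) = A ^ m * (1 - A * AD) := by
    intro m
    induction m with
    | zero => simp
    | succ n ih =>
      have hcomm : A ^ n * (1 - A * AD) = (1 - A * AD) * A ^ n := (cP.pow_left n).eq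
      calc S ^ (n + 1) * (1 - A * AD) = S * (S ^ n * (1 - A * AD)) := by
            rw [pow_succ', Matrix.mul_assoc]
        _ = S * ((1 - A * AD) * A ^ n) := by rw [ih, hcomm]
        _ = A * ((1 - A * AD) * A ^ n) := by
            have hz : B * ((1 - A * AD) * A ^ n) = 0 := by
              rw [← Matrix.mul_assoc, h2, Matrix.zero_mul]
            rw [hS, Matrix.sub_mul, Matrix.mul_assoc, Matrix.mul_assoc, hz, Matrix.mul_zero,
              Matrix.mul_zero, sub_zero]
        _ = A ^ (n + 1) * (1 - A * AD) := by
            rw [← hcomm, ← Matrix.mul_assoc, ← pow_succ']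
  have hAk : A ^ k * (1 - A * AD) = 0 := by
    rw [Matrix.mul_sub, Matrix.mul_one, ← Matrix.mul_assoc, ← pow_succ, hA3, sub_self]
  refine ⟨?_, ?_, k, ?_⟩
  · rw [hXS]; exact hPX
  · rw [L1, hXS]
  · calc S ^ (k + 1) * X = S ^ k * (S * X) := by rw [pow_succ, Matrix.mul_assoc]
      _ = S ^ k * (A * AD) := by rw [L1]
      _ = S ^ k - S ^ k * (1 - A * AD) := by
          rw [Matrix.mul_sub, Matrix.mul_one, sub_sub_cancel]
      _ = S ^ k := by rw [hpow k, hAk, sub_zero]
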